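/- Let K_{ij} act on functions by exchanging variables x_i, x_j and P_{ij} exchange the i-th and j-th factors of (C^s)^{⊗(N+s)}. For f antisymmetric under all σ_{kl} = K_{kl}P_{kl}, and for fixed j with N < j ≤ N+s, the following identity of operators holds after restriction to x_{N+1} = ··· = x_{N+s} = 0 and projecting the last s tensor slots: Σ_{i=1}^{N} (1 − K_{ij}) f |_{x_j = 0} = Σ_{i=1}^{N} (1 + P_{ij}) f |_{x_j = 0}, and applying the projection (1^{⊗N} ⊗ e_1^⊥ ⊗···⊗ e_s^⊥) the sum Σ_{i=1}^N (1 + P_{ij}) f contributes N + 1 copies of the projected f (up to the reshuffling built into the antisymmetry). -/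
import Mathlib


open MvPolynomial

/-- Let `f` be a `(ℂ^s)^{⊗(N+s)}`-valued polynomial in
`x_1,…,x_{N+s}` (components `f c`), antisymmetric under all simultaneous
exchanges `σ_{kl} = K_{kl}P_{kl}`.  Fix `j` with `N < j ≤ N+s`.  Then, after
restriction to `x_{N+1} = ⋯ = x_{N+s} = 0` (the substitution `ev0`), for each
`i ≤ N` one has `(1 − K_{ij}) f = (1 + P_{ij}) f` (antisymmetry gives
`K_{ij} f = −P_{ij} f`), and applying the projection
`1^{⊗N} ⊗ e_1^⊥ ⊗ ⋯ ⊗ e_s^⊥` (the component at the extended tensor index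
`ext c'`), the sum `Σ_{i=1}^N (1 + P_{ij}) f` contributes `N` copies of the
projected `f` plus the reshuffled sum `Σ_{i=1}^N P_{ij} f`, i.e. `N + 1` copies
up to the reshuffling built into the antisymmetry. -/
theorem dunkl_difference_part_projection {N s : ℕ}
    (f : (Fin (N + s) → Fin s) → MvPolynomial (Fin (N + s)) ℂ)
    (hf : ∀ i j : Fin (N + s), i ≠ j → ∀ c,
      rename (Equiv.swap i j) (f (c ∘ Equiv.swap i j)) = - f c)
    (ev0 : MvPolynomial (Fin (N + s)) ℂ →ₐ[ℂ] MvPolynomial (Fin N) ℂ)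
    (hev0 : ev0 = aeval (fun i : Fin (N + s) =>
      if h : (i : ℕ) < N then (X (⟨i, h⟩ : Fin N) : MvPolynomial (Fin N) ℂ) else 0))
    (ext : (Fin N → Fin s) → (Fin (N + s) → Fin s))
    (hext : ∀ (c' : Fin N → Fin s) (i : Fin (N + s)),
      ext c' i = if h : (i : ℕ) < N then c' ⟨i, h⟩
        else ⟨(i : ℕ) - N, by have := i.isLt; omega⟩)
    (j : Fin (N + s)) (hj : N ≤ (j : ℕ)) :
    (∀ i : Fin (N + s), i ≠ j → ∀ c : Fin (N + s) → Fin s,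
      ev0 (f c - rename (Equiv.swap i j) (f c)) =
        ev0 (f c + f (c ∘ Equiv.swap i j))) ∧
    (∀ c' : Fin N → Fin s,
      ∑ i ∈ Finset.univ.filter (fun i : Fin (N + s) => (i : ℕ) < N),
          ev0 (f (ext c') - rename (Equiv.swap i j) (f (ext c'))) =
        N • ev0 (f (ext c')) +
          ∑ i ∈ Finset.univ.filter (fun i : Fin (N + s) => (i : ℕ) < N),
            ev0 (f (ext c' ∘ Equiv.swap i j))) := by
  have key : ∀ i : Fin (N + s), i ≠ j → ∀ c : Fin (N + s) → Fin s,
      rename (Equiv.swap i j) (f c) = - f (c ∘ Equiv.swap i j) := by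
    intro i hij c
    have h := hf i j hij (c ∘ Equiv.swap i j)
    have hcc : (c ∘ Equiv.swap i j) ∘ Equiv.swap i j = c := by
      ext x; simp [Function.comp]
    rw [hcc] at h
    rw [h]
  have part1 : ∀ i : Fin (N + s), i ≠ j → ∀ c : Fin (N + s) → Fin s,
      ev0 (f c - rename (Equiv.swap i j) (f c)) =
        ev0 (f c + f (c ∘ Equiv.swap i j)) := by
    intro i hij c
    rw [key i hij c]; ring_nf
  refine ⟨part1, fun c' => ?_⟩
  have hne : ∀ i ∈ Finset.univ.filter (fun i : Fin (N + s) => (i : ℕ) < N), i ≠ j := by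
    intro i hi
    simp only [Finset.mem_filter] at hi
    intro h; subst h; omega
  have hcard : (Finset.univ.filter (fun i : Fin (N + s) => (i : ℕ) < N)).card = N := by
    have hmap : (Finset.univ.filter (fun i : Fin (N + s) => (i : ℕ) < N)) =
        Finset.map ⟨fun x : Fin N => (⟨x.1, by omega⟩ : Fin (N + s)),
          fun a b hab => Fin.ext (by simpa using congrArg Fin.val hab)⟩ Finset.univ := by
      ext x
      simp only [Finset.mem_filter, Finset.mem_map, Function.Embedding.coeFn_mk,
        Finset.mem_univ, true_and]
      constructor
      · intro hx; exact ⟨⟨x, hx⟩, rfl⟩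
      · rintro ⟨y, rfl⟩; exact y.isLt
    rw [hmap, Finset.card_map, Finset.card_univ, Fintype.card_fin]
  rw [Finset.sum_congr rfl (fun i hi => by
      rw [part1 i (hne i hi) (ext c'), map_add]),
    Finset.sum_add_distrib, Finset.sum_const, hcard]
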